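/- arXiv:1310.0097 — 7 statements merged into one kernel-verified Lean document; each statement's English description precedes it below -/
import Mathlib

section
/- For every s ≥ 0 and every real α, the integral ∫_{α-π/2}^{α+π/2} (s·sin²θ·cosθ)/(1+s²cos²θ)^{5/2} dθ equals (2/3)·s·cos³α / ((1+s²)·(1+s²sin²α)^{3/2}). -/
open Real

theorem stmt_0 (s α : ℝ) (hs : 0 ≤ s) :
    ∫ θ in (α - π/2)..(α + π/2),
        s * sin θ ^ 2 * cos θ / (1 + s ^ 2 * cos θ ^ 2) ^ ((5 : ℝ)/2)
      = (2/3) * s * cos α ^ 3 /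
          ((1 + s ^ 2) * (1 + s ^ 2 * sin α ^ 2) ^ ((3 : ℝ)/2)) := by
  have hA : (0:ℝ) < 1 + s ^ 2 := by positivity
  set F : ℝ → ℝ := fun θ =>
    s / (3 * (1 + s ^ 2)) * (sin θ ^ 3 * (1 + s ^ 2 * cos θ ^ 2) ^ (-(3:ℝ)/2)) with hF
  have hpos : ∀ θ : ℝ, (0:ℝ) < 1 + s ^ 2 * cos θ ^ 2 := fun θ => by positivity
  have hderiv : ∀ θ : ℝ, HasDerivAt F
      (s * sin θ ^ 2 * cos θ / (1 + s ^ 2 * cos θ ^ 2) ^ ((5 : ℝ)/2)) θ := by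
    intro θ
    set g : ℝ := 1 + s ^ 2 * cos θ ^ 2 with hgdef
    have hg : HasDerivAt (fun θ => 1 + s ^ 2 * cos θ ^ 2)
        (s ^ 2 * (2 * cos θ * (-sin θ))) θ := by
      have := ((Real.hasDerivAt_cos θ).pow 2).const_mul (s ^ 2)
      have := this.const_add 1
      refine this.congr_deriv (Eq.symm ?_)
      push_cast
      ring
    have hr : HasDerivAt (fun x : ℝ => x ^ (-(3:ℝ)/2))
        ((-(3:ℝ)/2) * g ^ (-(3:ℝ)/2 - 1)) g :=
      Real.hasDerivAt_rpow_const (Or.inl (hpos θ).ne')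
    have hcomp := hr.comp θ hg
    have hsin := (Real.hasDerivAt_sin θ).pow 3
    have hprod := (hsin.mul hcomp).const_mul (s / (3 * (1 + s ^ 2)))
    refine hprod.congr_deriv (Eq.symm ?_)
    simp only [Function.comp_apply]
    push_cast
    have e1 : (-(3:ℝ)/2 - 1) = -((5:ℝ)/2) := by norm_num
    have e2 : g ^ (-((5:ℝ)/2)) = (g ^ ((5:ℝ)/2))⁻¹ := Real.rpow_neg (hpos θ).le _
    have e3 : g ^ (-(3:ℝ)/2) = g * (g ^ ((5:ℝ)/2))⁻¹ := by
      rw [show (-(3:ℝ)/2) = 1 + -((5:ℝ)/2) by norm_num,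
        Real.rpow_add (hpos θ), Real.rpow_one, e2]
    have hgpow : (0:ℝ) < g ^ ((5:ℝ)/2) := Real.rpow_pos_of_pos (hpos θ) _
    rw [e1, e2, e3]
    have hsc : sin θ ^ 2 = 1 - cos θ ^ 2 := by
      have := sin_sq_add_cos_sq θ; linarith
    field_simp
    simp only [Pi.pow_apply]
    linear_combination (-(s ^ 3 * sin θ ^ 2 * cos θ)) * sin_sq_add_cos_sq θ
  have hcont : Continuous fun θ : ℝ =>
      s * sin θ ^ 2 * cos θ / (1 + s ^ 2 * cos θ ^ 2) ^ ((5 : ℝ)/2) := by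
    apply Continuous.div
    · continuity
    · apply Continuous.rpow_const
      · continuity
      · intro x; exact Or.inl (hpos x).ne'
    · intro x; exact (Real.rpow_pos_of_pos (hpos x) _).ne'
  rw [intervalIntegral.integral_eq_sub_of_hasDerivAt (fun θ _ => hderiv θ)
    (hcont.intervalIntegrable _ _)]
  have h1 : sin (α + π/2) = cos α := sin_add_pi_div_two α
  have h2 : cos (α + π/2) = -sin α := cos_add_pi_div_two α
  have h3 : sin (α - π/2) = -cos α := sin_sub_pi_div_two α
  have h4 : cos (α - π/2) = sin α := cos_sub_pi_div_two α
  rw [hF]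
  simp only [h1, h2, h3, h4]
  have hB : (0:ℝ) < 1 + s ^ 2 * sin α ^ 2 := by positivity
  have e2 : (1 + s ^ 2 * sin α ^ 2) ^ (-(3:ℝ)/2)
      = ((1 + s ^ 2 * sin α ^ 2) ^ ((3:ℝ)/2))⁻¹ := by
    rw [show (-(3:ℝ)/2) = -((3:ℝ)/2) by norm_num]
    exact Real.rpow_neg hB.le _
  have hBpow : (0:ℝ) < (1 + s ^ 2 * sin α ^ 2) ^ ((3:ℝ)/2) :=
    Real.rpow_pos_of_pos hB _
  rw [show (-sin α) ^ 2 = sin α ^ 2 by ring, show (-cos α) ^ 3 = -cos α ^ 3 by ring, e2]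
  field_simp
  ring
end

section
/- For every s ≥ 0 and every real α, the integral ∫_{α-π/2}^{α+π/2} (s·sinθ·cos²θ)/(1+s²cos²θ)^{5/2} dθ equals (2/3)·s·sin³α / (1+s²sin²α)^{3/2}. -/
open Real

theorem stmt_1 (s α : ℝ) (hs : 0 ≤ s) :
    ∫ θ in (α - π/2)..(α + π/2),
        s * sin θ * cos θ ^ 2 / (1 + s ^ 2 * cos θ ^ 2) ^ ((5 : ℝ)/2)
      = (2/3) * s * sin α ^ 3 / (1 + s ^ 2 * sin α ^ 2) ^ ((3 : ℝ)/2) := by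
  have hb : ∀ θ : ℝ, (0:ℝ) < 1 + s ^ 2 * cos θ ^ 2 := fun θ => by positivity
  set G : ℝ → ℝ := fun θ => -(s/3) * cos θ ^ 3 * (1 + s ^ 2 * cos θ ^ 2) ^ (-(3:ℝ)/2) with hG
  have hderiv : ∀ θ ∈ Set.uIcc (α - π/2) (α + π/2),
      HasDerivAt G (s * sin θ * cos θ ^ 2 / (1 + s ^ 2 * cos θ ^ 2) ^ ((5:ℝ)/2)) θ := by
    intro θ _
    have hc : HasDerivAt (fun θ : ℝ => cos θ) (-sin θ) θ := hasDerivAt_cos θ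
    have hc3 : HasDerivAt (fun θ : ℝ => cos θ ^ 3) (3 * cos θ ^ 2 * (-sin θ)) θ := by
      simpa using hc.fun_pow 3
    have hbder : HasDerivAt (fun θ : ℝ => 1 + s ^ 2 * cos θ ^ 2)
        (s ^ 2 * (2 * cos θ * (-sin θ))) θ := by
      have h2 := ((hc.pow 2).const_mul (s ^ 2)).const_add 1
      simpa [mul_assoc, mul_comm, mul_left_comm] using h2
    have hr : HasDerivAt (fun θ : ℝ => (1 + s ^ 2 * cos θ ^ 2) ^ (-(3:ℝ)/2))
        ((-(3:ℝ)/2) * (1 + s ^ 2 * cos θ ^ 2) ^ (-(3:ℝ)/2 - 1) *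
          (s ^ 2 * (2 * cos θ * (-sin θ)))) θ := by
      have := hbder.rpow_const (p := -(3:ℝ)/2) (Or.inl (ne_of_gt (hb θ)))
      simpa [mul_comm, mul_assoc, mul_left_comm] using this
    have hGd := (hc3.fun_mul hr).const_mul (-(s/3))
    have hfun : G = fun y => -(s/3) * (cos y ^ 3 * (1 + s ^ 2 * cos y ^ 2) ^ (-(3:ℝ)/2)) := by
      funext y; simp [hG, mul_assoc]
    rw [hfun]
    convert hGd using 1
    case e'_4 => rfl
    case e'_5 => rfl
    set B := 1 + s ^ 2 * cos θ ^ 2 with hB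
    have hBpos := hb θ
    have e1 : B ^ (-(3:ℝ)/2 - 1) = B ^ (-(5:ℝ)/2) := by norm_num
    have e2 : B ^ (-(3:ℝ)/2) = B ^ (-(5:ℝ)/2) * B := by
      rw [← Real.rpow_add_one (ne_of_gt hBpos)]; norm_num; rfl
    have e3 : B ^ (-(5:ℝ)/2) = (B ^ ((5:ℝ)/2))⁻¹ := by
      rw [← Real.rpow_neg hBpos.le]; norm_num; rfl
    rw [e1, e2, div_eq_mul_inv, ← e3, hB]
    ring
  have hcont : Continuous fun θ : ℝ =>
      s * sin θ * cos θ ^ 2 / (1 + s ^ 2 * cos θ ^ 2) ^ ((5:ℝ)/2) := by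
    apply Continuous.div
    · continuity
    · exact (continuous_const.add (continuous_const.mul ((Real.continuous_cos).pow 2))).rpow_const
        (fun x => Or.inl (ne_of_gt (hb x)))
    · intro x
      exact ne_of_gt (Real.rpow_pos_of_pos (hb x) _)
  have hint := intervalIntegral.integral_eq_sub_of_hasDerivAt hderiv
    (hcont.intervalIntegrable _ _)
  rw [hint]
  have c1 : cos (α + π/2) = -sin α := by
    rw [Real.cos_add]; simp
  have c2 : cos (α - π/2) = sin α := by
    rw [Real.cos_sub]; simp
  simp only [hG, c1, c2]
  have hBpos : (0:ℝ) < 1 + s ^ 2 * sin α ^ 2 := by positivity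
  have hne : (1 + s ^ 2 * sin α ^ 2) ^ ((3:ℝ)/2) ≠ 0 :=
    ne_of_gt (Real.rpow_pos_of_pos hBpos _)
  have e3 : (1 + s ^ 2 * sin α ^ 2) ^ (-(3:ℝ)/2)
      = ((1 + s ^ 2 * sin α ^ 2) ^ ((3:ℝ)/2))⁻¹ := by
    rw [← Real.rpow_neg hBpos.le]; norm_num
  have hsq : (-sin α) ^ 2 = sin α ^ 2 := by ring
  have hcb : (-sin α) ^ 3 = -(sin α ^ 3) := by ring
  rw [hsq, hcb, e3]
  field_simp
  ring
end

section
/- For every s ≥ 0 and every real α, the integral ∫_{α-π/2}^{α+π/2} (s·cos³θ)/(1+s²cos²θ)^{5/2} dθ equals (2/3)·s·cosα·(2+sin²α+3s²sin²α) / ((1+s²)²·(1+s²sin²α)^{3/2}). -/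
open Real

private lemma key_poly (s u c : ℝ) (huc : u ^ 2 + c ^ 2 = 1) :
    (s / (1 + s ^ 2) * c - s * (1 + 3 * s ^ 2) / (3 * (1 + s ^ 2) ^ 2) * (3 * u ^ 2 * c))
        * (1 + s ^ 2 * c ^ 2)
      + 3 * s ^ 2 * c * u * (s / (1 + s ^ 2) * u - s * (1 + 3 * s ^ 2) / (3 * (1 + s ^ 2) ^ 2) * u ^ 3)
      = s * c ^ 3 := by
  have ha : (1 + s ^ 2) ≠ 0 := by positivity
  field_simp
  linear_combination (s * c * (s ^ 2 * ((1 + s ^ 2) - (1 + 3 * s ^ 2) * u ^ 2) - (1 + s ^ 2) ^ 2)) * huc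

private lemma hasDeriv (s θ : ℝ) :
    HasDerivAt (fun θ : ℝ =>
        (s / (1 + s ^ 2) * sin θ - s * (1 + 3 * s ^ 2) / (3 * (1 + s ^ 2) ^ 2) * sin θ ^ 3)
          / (1 + s ^ 2 * cos θ ^ 2) ^ ((3 : ℝ)/2))
      (s * cos θ ^ 3 / (1 + s ^ 2 * cos θ ^ 2) ^ ((5 : ℝ)/2)) θ := by
  have hD : (0 : ℝ) < 1 + s ^ 2 * cos θ ^ 2 := by positivity
  have hd : HasDerivAt (fun θ : ℝ => 1 + s ^ 2 * cos θ ^ 2) (-(2 * s ^ 2 * cos θ * sin θ)) θ := by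
    have h1 : HasDerivAt (fun θ : ℝ => cos θ ^ 2) (2 * cos θ ^ 1 * (-sin θ)) θ :=
      (hasDerivAt_cos θ).pow 2
    have h2 := (h1.const_mul (s ^ 2)).const_add 1
    refine h2.congr_deriv ?_
    ring
  have hN : HasDerivAt (fun θ : ℝ =>
        s / (1 + s ^ 2) * sin θ - s * (1 + 3 * s ^ 2) / (3 * (1 + s ^ 2) ^ 2) * sin θ ^ 3)
      (s / (1 + s ^ 2) * cos θ
        - s * (1 + 3 * s ^ 2) / (3 * (1 + s ^ 2) ^ 2) * (3 * sin θ ^ 2 * cos θ)) θ := by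
    have h1 := (hasDerivAt_sin θ).const_mul (s / (1 + s ^ 2))
    have h2 : HasDerivAt (fun θ : ℝ => sin θ ^ 3) (3 * sin θ ^ 2 * cos θ) θ := by
      have := (hasDerivAt_sin θ).pow 3
      exact this.congr_deriv (by ring)
    exact h1.sub (h2.const_mul _)
  have hg : HasDerivAt (fun θ : ℝ => (1 + s ^ 2 * cos θ ^ 2) ^ ((3 : ℝ)/2))
      ((-(2 * s ^ 2 * cos θ * sin θ)) * ((3 : ℝ)/2) * (1 + s ^ 2 * cos θ ^ 2) ^ ((3 : ℝ)/2 - 1)) θ :=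
    hd.rpow_const (Or.inl hD.ne')
  have hgne : (1 + s ^ 2 * cos θ ^ 2) ^ ((3 : ℝ)/2) ≠ 0 := (rpow_pos_of_pos hD _).ne'
  have hdiv := hN.div hg hgne
  refine hdiv.congr_deriv ?_
  symm
  -- now show equality of the two derivative expressions
  set D := 1 + s ^ 2 * cos θ ^ 2 with hDdef
  set r := D ^ ((1 : ℝ)/2) with hrdef
  have hrpos : 0 < r := rpow_pos_of_pos hD _
  have hpow : ∀ n : ℕ, r ^ n = D ^ ((n : ℝ)/2) := by
    intro n
    rw [hrdef, ← Real.rpow_natCast (D ^ ((1 : ℝ)/2)) n, ← Real.rpow_mul hD.le]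
    congr 1
    ring
  have hr2 : r ^ 2 = D := by
    rw [hpow 2]; norm_num
  have h3 : D ^ ((3 : ℝ)/2) = r ^ 3 := by rw [hpow 3]; norm_num
  have h5 : D ^ ((5 : ℝ)/2) = r ^ 5 := by rw [hpow 5]; norm_num
  have h1 : D ^ ((3 : ℝ)/2 - 1) = r := by
    rw [hrdef]; norm_num
  rw [h3, h5, h1]
  have key := key_poly s (sin θ) (cos θ) (by rw [sin_sq_add_cos_sq])
  have hnum : (s / (1 + s ^ 2) * cos θ
        - s * (1 + 3 * s ^ 2) / (3 * (1 + s ^ 2) ^ 2) * (3 * sin θ ^ 2 * cos θ)) * r ^ 3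
      - (s / (1 + s ^ 2) * sin θ - s * (1 + 3 * s ^ 2) / (3 * (1 + s ^ 2) ^ 2) * sin θ ^ 3)
        * ((-(2 * s ^ 2 * cos θ * sin θ)) * ((3 : ℝ)/2) * r)
      = s * cos θ ^ 3 * r := by
    have hDc : D = 1 + s ^ 2 * cos θ ^ 2 := hDdef
    linear_combination ((s / (1 + s ^ 2) * cos θ
        - s * (1 + 3 * s ^ 2) / (3 * (1 + s ^ 2) ^ 2) * (3 * sin θ ^ 2 * cos θ)) * r) * hr2
      + ((s / (1 + s ^ 2) * cos θ
        - s * (1 + 3 * s ^ 2) / (3 * (1 + s ^ 2) ^ 2) * (3 * sin θ ^ 2 * cos θ)) * r) * hDc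
      + r * key
  rw [div_eq_div_iff (by positivity) (by positivity)]
  linear_combination (-(r ^ 5)) * hnum

theorem stmt_2 (s α : ℝ) (hs : 0 ≤ s) :
    ∫ θ in (α - π/2)..(α + π/2),
        s * cos θ ^ 3 / (1 + s ^ 2 * cos θ ^ 2) ^ ((5 : ℝ)/2)
      = (2/3) * s * cos α * (2 + sin α ^ 2 + 3 * s ^ 2 * sin α ^ 2) /
          ((1 + s ^ 2) ^ 2 * (1 + s ^ 2 * sin α ^ 2) ^ ((3 : ℝ)/2)) := by
  have hc : Continuous fun θ : ℝ => s * cos θ ^ 3 / (1 + s ^ 2 * cos θ ^ 2) ^ ((5 : ℝ)/2) := by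
    apply Continuous.div (by continuity)
    · exact (by continuity : Continuous fun θ : ℝ => 1 + s ^ 2 * cos θ ^ 2).rpow_const
        fun x => Or.inr (by norm_num)
    · intro x
      exact (rpow_pos_of_pos (by positivity) _).ne'
  rw [intervalIntegral.integral_eq_sub_of_hasDerivAt (fun θ _ => hasDeriv s θ)
    (hc.intervalIntegrable _ _)]
  have e1 : sin (α + π/2) = cos α := sin_add_pi_div_two α
  have e2 : cos (α + π/2) = -sin α := cos_add_pi_div_two α
  have e3 : sin (α - π/2) = -cos α := sin_sub_pi_div_two α
  have e4 : cos (α - π/2) = sin α := cos_sub_pi_div_two α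
  rw [e1, e2, e3, e4]
  have hsq : (-sin α) ^ 2 = sin α ^ 2 := by ring
  rw [hsq]
  have ht : (0 : ℝ) < (1 + s ^ 2 * sin α ^ 2) ^ ((3 : ℝ)/2) :=
    rpow_pos_of_pos (by positivity) _
  have ha : (0 : ℝ) < 1 + s ^ 2 := by positivity
  have huc := sin_sq_add_cos_sq α
  field_simp
  linear_combination (-2 * s * cos α * (1 + 3 * s ^ 2)) * huc
end

section
/- Let ν : ℝ → ℝ be continuously differentiable, even, positive, with ν increasing on [0,∞). Define for s > 0: g(s) = 1 − (3/2)·s·∫_{−π/2}^{π/2} (ν'(s·cosθ)/ν(s·cosθ)⁴)·sin²θ dθ and h(s) = −(3/2)·s·∫_{−π/2}^{π/2} (ν'(s·cosθ)/ν(s·cosθ)⁴)·cos²θ dθ. Then h(s) = s·g'(s) for all s > 0. -/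
open Real MeasureTheory intervalIntegral Metric

theorem stmt_6 (ν : ℝ → ℝ) (hν : ContDiff ℝ 1 ν) (heven : ∀ x, ν (-x) = ν x)
    (hpos : ∀ x, 0 < ν x) (hmono : MonotoneOn ν (Set.Ici 0)) (s : ℝ) (hs : 0 < s) :
    (-(3/2) * s * ∫ θ in (-(π/2))..(π/2),
        (deriv ν (s * cos θ) / ν (s * cos θ) ^ 4) * cos θ ^ 2)
      = s * deriv (fun t : ℝ =>
          1 - (3/2) * t * ∫ θ in (-(π/2))..(π/2),
            (deriv ν (t * cos θ) / ν (t * cos θ) ^ 4) * sin θ ^ 2) s := by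
  set f : ℝ → ℝ := fun x => deriv ν x / ν x ^ 4 with hf_def
  have hf_cont : Continuous f := by
    apply Continuous.div (hν.continuous_deriv le_rfl) (hν.continuous.pow 4)
    intro x; exact pow_ne_zero _ (hpos x).ne'
  set N : ℝ → ℝ := fun x => ∫ u in (0:ℝ)..x, f u with hN_def
  have hN : ∀ x : ℝ, HasDerivAt N (f x) x := fun x =>
    (hf_cont.integral_hasStrictDerivAt 0 x).hasDerivAt
  have hN0 : N 0 = 0 := intervalIntegral.integral_same
  have hN_cont : Continuous N := continuous_iff_continuousAt.2 fun x => (hN x).continuousAt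
  -- Step 1: integration by parts
  have parts : ∀ t : ℝ,
      (∫ θ in (-(π/2))..(π/2), N (t * cos θ) * cos θ)
        = t * ∫ θ in (-(π/2))..(π/2), f (t * cos θ) * sin θ ^ 2 := by
    intro t
    have hu : ∀ x ∈ Set.uIcc (-(π/2)) (π/2),
        HasDerivAt (fun θ => N (t * cos θ)) (f (t * cos x) * (t * (-sin x))) x := by
      intro x _
      exact (hN (t * cos x)).comp x ((hasDerivAt_cos x).const_mul t)
    have hv : ∀ x ∈ Set.uIcc (-(π/2)) (π/2), HasDerivAt sin (cos x) x :=
      fun x _ => hasDerivAt_sin x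
    have hu' : IntervalIntegrable (fun x => f (t * cos x) * (t * (-sin x))) volume
        (-(π/2)) (π/2) := by
      apply Continuous.intervalIntegrable; fun_prop
    have hv' : IntervalIntegrable cos volume (-(π/2)) (π/2) :=
      continuous_cos.intervalIntegrable _ _
    have := intervalIntegral.integral_mul_deriv_eq_deriv_mul hu hv hu' hv'
    simp only [cos_pi_div_two, cos_neg, mul_zero, hN0, sin_pi_div_two, sin_neg] at this
    have heq : (∫ x in (-(π/2))..(π/2), f (t * cos x) * (t * -sin x) * sin x)
        = - ∫ x in (-(π/2))..(π/2), t * (f (t * cos x) * sin x ^ 2) := by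
      rw [← intervalIntegral.integral_neg]
      apply intervalIntegral.integral_congr
      intro x _
      ring
    rw [this, heq, ← intervalIntegral.integral_const_mul]
    ring
  -- Step 2: differentiation under the integral sign
  obtain ⟨C, hC⟩ := (isCompact_Icc (a := -(|s|+1)) (b := |s|+1)).exists_bound_of_continuousOn
    hf_cont.continuousOn
  have key : HasDerivAt (fun x : ℝ => ∫ θ in (-(π/2))..(π/2), N (x * cos θ) * cos θ)
      (∫ θ in (-(π/2))..(π/2), f (s * cos θ) * cos θ ^ 2) s := by
    have H := intervalIntegral.hasDerivAt_integral_of_dominated_loc_of_deriv_le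
      (μ := volume) (a := -(π/2)) (b := π/2)
      (F := fun x θ => N (x * cos θ) * cos θ)
      (F' := fun x θ => f (x * cos θ) * cos θ ^ 2)
      (x₀ := s) (bound := fun _ => C) (s := ball s 1) (ball_mem_nhds s one_pos)
      (Filter.Eventually.of_forall fun x =>
        (Continuous.aestronglyMeasurable (by fun_prop)).restrict)
      (Continuous.intervalIntegrable (by fun_prop) _ _)
      (Continuous.aestronglyMeasurable (by fun_prop)).restrict
      (Filter.Eventually.of_forall (fun θ _ x hx => ?_))
      (intervalIntegrable_const)
      (Filter.Eventually.of_forall (fun θ _ x _ => ?_))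
    · exact H.2
    · -- bound
      have hxC : ‖f (x * cos θ)‖ ≤ C := by
        apply hC
        have h1 : |x * cos θ| ≤ |x| := by
          rw [abs_mul]
          exact mul_le_of_le_one_right (abs_nonneg x) (abs_cos_le_one θ)
        have h2 : |x| ≤ |s| + 1 := by
          have h3 := mem_ball_iff_norm.1 hx
          rw [Real.norm_eq_abs] at h3
          have h4 := abs_sub_abs_le_abs_sub x s
          linarith
        exact Set.mem_Icc.2 (abs_le.1 (h1.trans h2))
      have h1 : ‖f (x * cos θ) * cos θ ^ 2‖ = ‖f (x * cos θ)‖ * cos θ ^ 2 := by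
        rw [norm_mul]; congr 1
        rw [Real.norm_eq_abs, abs_of_nonneg (sq_nonneg _)]
      rw [h1]
      calc ‖f (x * cos θ)‖ * cos θ ^ 2 ≤ C * 1 := by
            apply mul_le_mul hxC _ (sq_nonneg _) ((norm_nonneg _).trans hxC)
            nlinarith [abs_le.1 (abs_cos_le_one θ)]
        _ = C := mul_one C
    · -- differentiability
      have h1 : HasDerivAt (fun x : ℝ => N (x * cos θ)) (f (x * cos θ) * cos θ) x :=
        by
          have h2 : HasDerivAt (fun y : ℝ => y * cos θ) (cos θ) x := hasDerivAt_mul_const _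
          exact (hN (x * cos θ)).comp x h2
      have := h1.mul_const (cos θ)
      exact this.congr_deriv (by ring)
  -- Assemble
  have hfun : (fun t : ℝ =>
      1 - (3/2) * t * ∫ θ in (-(π/2))..(π/2),
        (deriv ν (t * cos θ) / ν (t * cos θ) ^ 4) * sin θ ^ 2)
      = fun t : ℝ => 1 - (3/2) * ∫ θ in (-(π/2))..(π/2), N (t * cos θ) * cos θ := by
    funext t
    rw [parts t]
    ring
  rw [hfun]
  have hD : HasDerivAt (fun t : ℝ =>
      1 - (3/2) * ∫ θ in (-(π/2))..(π/2), N (t * cos θ) * cos θ)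
      (0 - (3/2) * ∫ θ in (-(π/2))..(π/2), f (s * cos θ) * cos θ ^ 2) s :=
    (hasDerivAt_const s (1:ℝ)).sub (key.const_mul (3/2))
  rw [hD.deriv]
  ring
end

section
/- For the L² amoeba metric ν(s)=√(1+s²) and contrast parameter β>0, the edge-stopping function g(s) = 1 − (3/2)·βs·∫_{−π/2}^{π/2} (ν'(βs·cosθ)/ν(βs·cosθ)⁴)·sin²θ dθ equals the Perona–Malik function 1/(1+β²s²) for all s ≥ 0. -/
open Real

lemma key_int (a : ℝ) : ∫ θ in (-(π/2))..(π/2),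
    ((a * cos θ / Real.sqrt (1 + (a * cos θ) ^ 2)) /
      (Real.sqrt (1 + (a * cos θ) ^ 2)) ^ 4) * sin θ ^ 2
    = 2 * a / (3 * (1 + a ^ 2)) := by
  have ha1 : (0:ℝ) < 1 + a ^ 2 := by positivity
  set f : ℝ → ℝ := fun θ =>
    ((a * cos θ / Real.sqrt (1 + (a * cos θ) ^ 2)) /
      (Real.sqrt (1 + (a * cos θ) ^ 2)) ^ 4) * sin θ ^ 2 with hf
  set F : ℝ → ℝ := fun θ =>
    a * sin θ ^ 3 / (3 * (1 + a ^ 2) *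
      ((1 + (a * cos θ) ^ 2) * Real.sqrt (1 + (a * cos θ) ^ 2))) with hF
  have hderiv : ∀ θ ∈ Set.uIcc (-(π/2)) (π/2), HasDerivAt F (f θ) θ := by
    intro θ _
    have hqpos : (0:ℝ) < 1 + (a * cos θ) ^ 2 := by positivity
    have hq : HasDerivAt (fun θ => 1 + (a * cos θ) ^ 2)
        (2 * (a * cos θ) ^ 1 * (a * (-sin θ))) θ :=
      (((hasDerivAt_cos θ).const_mul a).pow 2).const_add 1
    have hsqrt := hq.sqrt hqpos.ne'
    have hden := (hq.mul hsqrt).const_mul (3 * (1 + a ^ 2))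
    have hnum := ((hasDerivAt_sin θ).pow 3).const_mul a
    have hdne : 3 * (1 + a ^ 2) *
        ((1 + (a * cos θ) ^ 2) * Real.sqrt (1 + (a * cos θ) ^ 2)) ≠ 0 := by
      positivity
    have hdiv : HasDerivAt F _ θ := hnum.div hden hdne
    convert hdiv using 1
    simp only [hf]
    set r := Real.sqrt (1 + (a * cos θ) ^ 2) with hr
    have hrpos : 0 < r := Real.sqrt_pos.2 hqpos
    have hr2 : 1 + (a * cos θ) ^ 2 = r ^ 2 := (Real.sq_sqrt hqpos.le).symm
    have h2 : sin θ ^ 2 = 1 - cos θ ^ 2 := by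
      have := sin_sq_add_cos_sq θ; linarith
    have h3 : sin θ ^ 3 = (1 - cos θ ^ 2) * sin θ := by
      rw [pow_succ, h2]
    norm_num [h3, h2, hr2]
    field_simp
    linear_combination (3*a*cos θ*(1-cos θ^2)) * hr2 -
      (3*a^3*cos θ*(1-cos θ^2)) * h2
  have hcont : Continuous f := by
    have hcq : Continuous fun x : ℝ => 1 + (a * cos x) ^ 2 := by continuity
    have hcr : Continuous fun x : ℝ => Real.sqrt (1 + (a * cos x) ^ 2) :=
      Real.continuous_sqrt.comp hcq
    have hne : ∀ x : ℝ, Real.sqrt (1 + (a * cos x) ^ 2) ≠ 0 := fun x =>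
      (Real.sqrt_pos.2 (by positivity)).ne'
    exact (((by continuity : Continuous fun x : ℝ => a * cos x).div hcr hne).div
      (hcr.pow 4) (fun x => pow_ne_zero _ (hne x))).mul (by continuity)
  have := intervalIntegral.integral_eq_sub_of_hasDerivAt hderiv
    hcont.continuousOn.intervalIntegrable
  rw [this]
  simp [hF, Real.sqrt_one]
  field_simp
  ring

theorem stmt_9 (β : ℝ) (hβ : 0 < β) (s : ℝ) (hs : 0 ≤ s) :
    1 - (3/2) * (β * s) * ∫ θ in (-(π/2))..(π/2),
        ((β * s * cos θ / Real.sqrt (1 + (β * s * cos θ) ^ 2)) /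
          (Real.sqrt (1 + (β * s * cos θ) ^ 2)) ^ 4) * sin θ ^ 2
      = 1 / (1 + β ^ 2 * s ^ 2) := by
  rw [key_int (β * s)]
  have h : (0:ℝ) < 1 + (β * s) ^ 2 := by positivity
  have h' : (0:ℝ) < 1 + β ^ 2 * s ^ 2 := by positivity
  field_simp
  ring
end

section
/- For 0 ≤ α ≤ π and s ≥ 0, ∫_{α−π/2}^{α+π/2} (sin²θ·sgn(cosθ))/(1+s·|cosθ|)⁴ dθ = ∫_{−π/2+α}^{π/2−α} sin²θ/(1+s·cosθ)⁴ dθ. -/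
open Real MeasureTheory intervalIntegral Set

theorem stmt_10 (s α : ℝ) (hs : 0 ≤ s) (hα0 : 0 ≤ α) (hαπ : α ≤ π) :
    ∫ θ in (α - π/2)..(α + π/2),
        sin θ ^ 2 * Real.sign (cos θ) / (1 + s * |cos θ|) ^ 4
      = ∫ θ in (-(π/2) + α)..(π/2 - α), sin θ ^ 2 / (1 + s * cos θ) ^ 4 := by
  have hπ := Real.pi_pos
  set f : ℝ → ℝ := fun θ => sin θ ^ 2 * Real.sign (cos θ) / (1 + s * |cos θ|) ^ 4 with hf
  set g : ℝ → ℝ := fun θ => sin θ ^ 2 / (1 + s * cos θ) ^ 4 with hg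
  have hgcont : ∀ x : ℝ, 0 ≤ cos x → ContinuousAt g x := by
    intro x hx
    apply ContinuousAt.div
    · fun_prop
    · fun_prop
    · have : (0:ℝ) < 1 + s * cos x := by positivity
      positivity
  have hgint : ∀ a b : ℝ, -(π/2) ≤ a → a ≤ π/2 → -(π/2) ≤ b → b ≤ π/2 →
      IntervalIntegrable g volume a b := by
    intro a b ha1 ha2 hb1 hb2
    apply ContinuousOn.intervalIntegrable
    intro x hx
    have hx' : x ∈ Icc (-(π/2)) (π/2) := by
      rcases le_total a b with h | h
      · rw [uIcc_of_le h] at hx; exact ⟨le_trans ha1 hx.1, le_trans hx.2 hb2⟩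
      · rw [uIcc_of_ge h] at hx; exact ⟨le_trans hb1 hx.1, le_trans hx.2 ha2⟩
    exact (hgcont x (Real.cos_nonneg_of_mem_Icc hx')).continuousWithinAt
  -- ae exclusion of a single point
  have hne : ∀ c : ℝ, ∀ᵐ x : ℝ, x ≠ c := by
    intro c
    rw [ae_iff]
    simp [measure_singleton]
  -- first piece: f = g a.e. on Ι (α - π/2) (π/2)
  have h1ae : ∀ᵐ x : ℝ, x ∈ Set.uIoc (α - π/2) (π/2) → f x = g x := by
    filter_upwards [hne (π/2)] with x hx hmem
    rw [uIoc_of_le (by linarith)] at hmem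
    have hcos : 0 < cos x := by
      apply Real.cos_pos_of_mem_Ioo
      constructor
      · linarith [hmem.1]
      · exact lt_of_le_of_ne hmem.2 hx
    simp [hf, hg, Real.sign_of_pos hcos, abs_of_pos hcos]
  -- second piece: f = (fun θ => -g (π - θ)) a.e. on Ι (π/2) (α + π/2)
  have h2ae : ∀ᵐ x : ℝ, x ∈ Set.uIoc (π/2) (α + π/2) → f x = -g (π - x) := by
    filter_upwards [hne (π + π/2)] with x hx hmem
    rw [uIoc_of_le (by linarith)] at hmem
    have hlt : x < π + π/2 := lt_of_le_of_ne (by linarith [hmem.2]) hx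
    have hcos : cos x < 0 := Real.cos_neg_of_pi_div_two_lt_of_lt hmem.1 hlt
    simp only [hf, hg, Real.sign_of_neg hcos, abs_of_neg hcos,
      Real.cos_pi_sub, Real.sin_pi_sub]
    ring
  have hle1 : α - π/2 ≤ π/2 := by linarith
  have hle2 : π/2 ≤ α + π/2 := by linarith
  -- integrabilities
  have hg1 : IntervalIntegrable g volume (α - π/2) (π/2) :=
    hgint _ _ (by linarith) (by linarith) (by linarith) (by linarith)
  have hg2 : IntervalIntegrable g volume (α - π/2) (π/2 - α) :=
    hgint _ _ (by linarith) (by linarith) (by linarith) (by linarith)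
  have hg3 : IntervalIntegrable g volume (π/2 - α) (π/2) :=
    hgint _ _ (by linarith) (by linarith) (by linarith) (by linarith)
  have hh2 : IntervalIntegrable (fun θ => -g (π - θ)) volume (π/2) (α + π/2) := by
    apply ContinuousOn.intervalIntegrable
    intro x hx
    rw [uIcc_of_le hle2] at hx
    have hc : 0 ≤ cos (π - x) :=
      Real.cos_nonneg_of_mem_Icc ⟨by linarith [hx.2], by linarith [hx.1]⟩
    exact (((hgcont (π - x) hc).comp (by fun_prop)).neg).continuousWithinAt
  have hf1 : IntervalIntegrable f volume (α - π/2) (π/2) := by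
    apply hg1.congr_ae
    rw [Filter.EventuallyEq, ae_restrict_iff' measurableSet_uIoc]
    filter_upwards [h1ae] with x hx hmem using (hx hmem).symm
  have hf2 : IntervalIntegrable f volume (π/2) (α + π/2) := by
    apply hh2.congr_ae
    rw [Filter.EventuallyEq, ae_restrict_iff' measurableSet_uIoc]
    filter_upwards [h2ae] with x hx hmem using (hx hmem).symm
  have hsplit : ∫ θ in (α - π/2)..(α + π/2), f θ
      = (∫ θ in (α - π/2)..(π/2), f θ) + ∫ θ in (π/2)..(α + π/2), f θ :=
    (integral_add_adjacent_intervals hf1 hf2).symm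
  have e1 : ∫ θ in (α - π/2)..(π/2), f θ = ∫ θ in (α - π/2)..(π/2), g θ :=
    integral_congr_ae h1ae
  have e2 : ∫ θ in (π/2)..(α + π/2), f θ = ∫ θ in (π/2)..(α + π/2), -g (π - θ) :=
    integral_congr_ae h2ae
  have e3 : ∫ θ in (π/2)..(α + π/2), -g (π - θ) = -∫ θ in (π/2 - α)..(π/2), g θ := by
    rw [intervalIntegral.integral_neg, integral_comp_sub_left g π,
      show π - (α + π/2) = π/2 - α from by ring, show π - π/2 = π/2 from by ring]
  have e4 : (∫ θ in (α - π/2)..(π/2), g θ) - (∫ θ in (π/2 - α)..(π/2), g θ)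
      = ∫ θ in (α - π/2)..(π/2 - α), g θ := by
    have := integral_add_adjacent_intervals hg2 hg3
    linarith [this]
  have : (α : ℝ) - π/2 = -(π/2) + α := by ring
  rw [hsplit, e1, e2, e3, ← this]
  linarith [e4]
end

section
/- For s ≥ 0 and β > 0, the expression 3·∫_0^{π/2} sin²θ·cosθ/ν(βs cosθ)³ dθ with ν(t)=√(1+t²) equals 1/2 + (1/2)·∫_0^{π/2} cosθ/ν(βs cosθ)³ dθ + (3/2)·βs·∫_0^{π/2} (ν'(βs cosθ)/ν(βs cosθ)⁴)·sin²θ·cos(2θ) dθ, where ν'(t)=t/√(1+t²). -/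
open Real intervalIntegral

noncomputable def nu (a θ : ℝ) : ℝ := Real.sqrt (1 + (a * Real.cos θ)^2)

lemma nu_pos (a θ : ℝ) : 0 < nu a θ := Real.sqrt_pos.2 (by positivity)

lemma cont_nu (a : ℝ) : Continuous (nu a) :=
  (continuous_const.add ((continuous_const.mul Real.continuous_cos).pow 2)).sqrt

lemma hasDerivAt_nu3 (a θ : ℝ) :
    HasDerivAt (fun θ => (nu a θ)^3)
      (3 * (nu a θ)^2 * ((-2*a^2*Real.cos θ*Real.sin θ) / (2 * nu a θ))) θ := by
  have hu : (0:ℝ) < 1 + (a * Real.cos θ)^2 := by positivity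
  have h1 : HasDerivAt (fun θ => 1 + (a * Real.cos θ)^2) (-2*a^2*Real.cos θ*Real.sin θ) θ := by
    have := (((Real.hasDerivAt_cos θ).const_mul a).fun_pow 2).const_add 1
    exact this.congr_deriv (by push_cast; ring)
  have h2 := (Real.hasDerivAt_sqrt (ne_of_gt hu)).comp θ h1
  have := h2.fun_pow 3
  refine this.congr_deriv ?_
  simp only [Function.comp]
  unfold nu; ring

lemma nu3_ne (a θ : ℝ) : (nu a θ)^3 ≠ 0 := ne_of_gt (pow_pos (nu_pos a θ) 3)

lemma hasDerivAt_F (a θ : ℝ) :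
    HasDerivAt (fun θ => Real.sin θ / (nu a θ)^3)
      (Real.cos θ / (nu a θ)^3
        + 3 * a^2 * Real.sin θ ^ 2 * Real.cos θ / (nu a θ)^5) θ := by
  have hν := nu_pos a θ
  have h := (Real.hasDerivAt_sin θ).div (hasDerivAt_nu3 a θ) (nu3_ne a θ)
  refine h.congr_deriv ?_
  field_simp
  ring_nf

lemma hasDerivAt_G (a θ : ℝ) :
    HasDerivAt (fun θ => Real.sin θ ^ 3 / (nu a θ)^3)
      (3 * Real.sin θ ^ 2 * Real.cos θ / (nu a θ)^3
        + 3 * a^2 * Real.sin θ ^ 4 * Real.cos θ / (nu a θ)^5) θ := by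
  have hν := nu_pos a θ
  have hnum : HasDerivAt (fun θ => Real.sin θ ^ 3) (3 * Real.sin θ ^ 2 * Real.cos θ) θ := by
    have := (Real.hasDerivAt_sin θ).fun_pow 3
    exact this.congr_deriv (by push_cast; ring)
  have h := hnum.div (hasDerivAt_nu3 a θ) (nu3_ne a θ)
  refine h.congr_deriv ?_
  field_simp
  ring_nf

lemma cont_aux (a : ℝ) (f : ℝ → ℝ) (hf : Continuous f) (n : ℕ) :
    Continuous (fun θ => f θ / (nu a θ)^n) :=
  hf.div ((cont_nu a).pow n) (fun θ => ne_of_gt (pow_pos (nu_pos a θ) n))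

lemma nu_at_pi2 (a : ℝ) : nu a (π/2) = 1 := by
  unfold nu; simp

-- I0 + 3a² J2 = 1
lemma eqF (a : ℝ) :
    (∫ θ in (0:ℝ)..(π/2), Real.cos θ / (nu a θ)^3)
      + 3*a^2 * (∫ θ in (0:ℝ)..(π/2), Real.sin θ ^ 2 * Real.cos θ / (nu a θ)^5) = 1 := by
  have hc1 : Continuous (fun θ => Real.cos θ / (nu a θ)^3) :=
    cont_aux a _ Real.continuous_cos 3
  have hc2 : Continuous (fun θ => 3 * a^2 * Real.sin θ ^ 2 * Real.cos θ / (nu a θ)^5) :=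
    cont_aux a _ (((continuous_const.mul (Real.continuous_sin.pow 2))).mul Real.continuous_cos) 5
  have hFTC := intervalIntegral.integral_eq_sub_of_hasDerivAt
    (f := fun θ => Real.sin θ / (nu a θ)^3)
    (f' := fun θ => Real.cos θ / (nu a θ)^3
        + 3 * a^2 * Real.sin θ ^ 2 * Real.cos θ / (nu a θ)^5)
    (a := 0) (b := π/2)
    (fun θ _ => hasDerivAt_F a θ)
    ((hc1.add hc2).intervalIntegrable 0 (π/2))
  rw [intervalIntegral.integral_add (hc1.intervalIntegrable 0 (π/2))
    (hc2.intervalIntegrable 0 (π/2))] at hFTC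
  have e2 : (∫ θ in (0:ℝ)..(π/2), 3 * a^2 * Real.sin θ ^ 2 * Real.cos θ / (nu a θ)^5)
      = 3*a^2 * ∫ θ in (0:ℝ)..(π/2), Real.sin θ ^ 2 * Real.cos θ / (nu a θ)^5 := by
    rw [← intervalIntegral.integral_const_mul]; congr 1; ext θ; ring
  rw [e2] at hFTC
  simp [nu_at_pi2] at hFTC
  linarith [hFTC]

-- 3 I2 + 3a² J4 = 1
lemma eqG (a : ℝ) :
    3 * (∫ θ in (0:ℝ)..(π/2), Real.sin θ ^ 2 * Real.cos θ / (nu a θ)^3)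
      + 3*a^2 * (∫ θ in (0:ℝ)..(π/2), Real.sin θ ^ 4 * Real.cos θ / (nu a θ)^5) = 1 := by
  have hc1 : Continuous (fun θ => 3 * (Real.sin θ ^ 2 * Real.cos θ) / (nu a θ)^3) :=
    cont_aux a _ (continuous_const.mul ((Real.continuous_sin.pow 2).mul Real.continuous_cos)) 3
  have hc2 : Continuous (fun θ => 3 * a^2 * Real.sin θ ^ 4 * Real.cos θ / (nu a θ)^5) :=
    cont_aux a _ (((continuous_const.mul (Real.continuous_sin.pow 4))).mul Real.continuous_cos) 5
  have hFTC := intervalIntegral.integral_eq_sub_of_hasDerivAt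
    (f := fun θ => Real.sin θ ^ 3 / (nu a θ)^3)
    (f' := fun θ => 3 * (Real.sin θ ^ 2 * Real.cos θ) / (nu a θ)^3
        + 3 * a^2 * Real.sin θ ^ 4 * Real.cos θ / (nu a θ)^5)
    (a := 0) (b := π/2)
    (fun θ _ => by have := hasDerivAt_G a θ; refine this.congr_deriv ?_; ring_nf)
    ((hc1.add hc2).intervalIntegrable 0 (π/2))
  rw [intervalIntegral.integral_add (hc1.intervalIntegrable 0 (π/2))
    (hc2.intervalIntegrable 0 (π/2))] at hFTC
  have e1 : (∫ θ in (0:ℝ)..(π/2), 3 * (Real.sin θ ^ 2 * Real.cos θ) / (nu a θ)^3)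
      = 3 * ∫ θ in (0:ℝ)..(π/2), Real.sin θ ^ 2 * Real.cos θ / (nu a θ)^3 := by
    rw [← intervalIntegral.integral_const_mul]; congr 1; ext θ; ring
  have e2 : (∫ θ in (0:ℝ)..(π/2), 3 * a^2 * Real.sin θ ^ 4 * Real.cos θ / (nu a θ)^5)
      = 3*a^2 * ∫ θ in (0:ℝ)..(π/2), Real.sin θ ^ 4 * Real.cos θ / (nu a θ)^5 := by
    rw [← intervalIntegral.integral_const_mul]; congr 1; ext θ; ring
  rw [e1, e2] at hFTC
  simp [nu_at_pi2] at hFTC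
  linarith [hFTC]

theorem stmt_18 (β s : ℝ) (hβ : 0 < β) (hs : 0 ≤ s) :
    3 * ∫ θ in (0:ℝ)..(π/2),
        sin θ ^ 2 * cos θ / (Real.sqrt (1 + (β * s * cos θ) ^ 2)) ^ 3
      = 1/2
        + (1/2) * (∫ θ in (0:ℝ)..(π/2),
            cos θ / (Real.sqrt (1 + (β * s * cos θ) ^ 2)) ^ 3)
        + (3/2) * (β * s) * ∫ θ in (0:ℝ)..(π/2),
            ((β * s * cos θ / Real.sqrt (1 + (β * s * cos θ) ^ 2)) /
              (Real.sqrt (1 + (β * s * cos θ) ^ 2)) ^ 4) * sin θ ^ 2 * cos (2 * θ) := by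
  have hrw : ∀ θ : ℝ, Real.sqrt (1 + (β * s * Real.cos θ) ^ 2) = nu (β*s) θ := fun θ => rfl
  simp only [hrw]
  set a := β * s with ha
  have hJ2 : Continuous (fun θ => Real.sin θ ^ 2 * Real.cos θ / (nu a θ)^5) :=
    cont_aux a _ ((Real.continuous_sin.pow 2).mul Real.continuous_cos) 5
  have hJ4 : Continuous (fun θ => Real.sin θ ^ 4 * Real.cos θ / (nu a θ)^5) :=
    cont_aux a _ ((Real.continuous_sin.pow 4).mul Real.continuous_cos) 5
  have hT : (∫ θ in (0:ℝ)..(π/2),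
        ((a * Real.cos θ / nu a θ) / (nu a θ)^4) * Real.sin θ ^ 2 * Real.cos (2*θ))
      = a * (∫ θ in (0:ℝ)..(π/2), Real.sin θ ^ 2 * Real.cos θ / (nu a θ)^5)
        - 2*a * (∫ θ in (0:ℝ)..(π/2), Real.sin θ ^ 4 * Real.cos θ / (nu a θ)^5) := by
    rw [← intervalIntegral.integral_const_mul, ← intervalIntegral.integral_const_mul,
      ← intervalIntegral.integral_sub ((continuous_const.fun_mul hJ2).intervalIntegrable 0 (π/2))
        ((continuous_const.fun_mul hJ4).intervalIntegrable 0 (π/2))]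
    apply intervalIntegral.integral_congr
    intro θ _
    have hν := nu_pos a θ
    have hcos2 : Real.cos (2*θ) = 1 - 2 * Real.sin θ ^ 2 := by
      rw [Real.cos_two_mul, Real.cos_sq']; ring
    show a * Real.cos θ / nu a θ / (nu a θ)^4 * Real.sin θ ^ 2 * Real.cos (2*θ)
      = a * (Real.sin θ ^ 2 * Real.cos θ / (nu a θ)^5) - 2 * a * (Real.sin θ ^ 4 * Real.cos θ / (nu a θ)^5)
    rw [hcos2]
    field_simp
  rw [hT]
  linear_combination (eqG a) - (1/2) * (eqF a)
end
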